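/- Let G be a finite simple graph, let F be a feedback vertex set of G, and let s, t be vertices with dist_G(s,t) = k ≥ 4·|F| + 3. Then there exists an index p with 1 ≤ p ≤ k − 1 such that any two st-shortest paths P and Q that are connected by a TJ-reconfiguration sequence have the same vertex at position p. -/

import Mathlib

open SimpleGraph

/-- `W` is a shortest path from `s` to `t` in `G`: a path whose length (number of edges)
equals `dist_G(s,t)`. -/
def IsShortestSTPath {V : Type*} (G : SimpleGraph V) {s t : V} (W : G.Walk s t) : Prop :=
  W.IsPath ∧ W.length = G.dist s t

/-- Two `st`-paths of the same length are TJ-adjacent if their vertex sequences differ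
at exactly one position. -/
def TJAdjacent {V : Type*} (G : SimpleGraph V) {s t : V} (P Q : G.Walk s t) : Prop :=
  P.length = Q.length ∧ ∃! i : ℕ, P.getVert i ≠ Q.getVert i

/-- A TJ-reconfiguration sequence from `P` to `Q` of length `ℓ`: a sequence
`P = P_0, P_1, …, P_ℓ = Q` of `st`-shortest paths in which consecutive paths are
TJ-adjacent. -/
def TJSeq {V : Type*} (G : SimpleGraph V) {s t : V} (P Q : G.Walk s t) (ℓ : ℕ) : Prop :=
  ∃ f : ℕ → G.Walk s t, f 0 = P ∧ f ℓ = Q ∧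
    (∀ i ≤ ℓ, IsShortestSTPath G (f i)) ∧ ∀ i < ℓ, TJAdjacent G (f i) (f (i + 1))

lemma exists_prefix_walk {V : Type*} {G : SimpleGraph V} :
    ∀ {u v : V} (W : G.Walk u v) (i : ℕ),
      ∃ W' : G.Walk u (W.getVert i), W'.length = min i W.length := by
  intro u v W
  induction W with
  | nil => intro i; exact ⟨Walk.nil, by simp⟩
  | cons h W ih =>
    intro i
    cases i with
    | zero => exact ⟨Walk.nil, by simp; rfl⟩
    | succ n =>
      obtain ⟨W', hW'⟩ := ih n
      exact ⟨Walk.cons h W', by simp [hW', Nat.succ_min_succ]⟩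

lemma exists_suffix_walk {V : Type*} {G : SimpleGraph V} :
    ∀ {u v : V} (W : G.Walk u v) (i : ℕ),
      ∃ W' : G.Walk (W.getVert i) v, W'.length = W.length - i := by
  intro u v W
  induction W with
  | nil => intro i; exact ⟨Walk.nil, by simp⟩
  | cons h W ih =>
    intro i
    cases i with
    | zero => exact ⟨Walk.cons h W, by simp; rfl⟩
    | succ n =>
      obtain ⟨W', hW'⟩ := ih n
      exact ⟨W', by simp [hW']⟩

lemma dist_getVert {V : Type*} {G : SimpleGraph V} {s t : V} (W : G.Walk s t)
    (hW : W.length = G.dist s t) {i : ℕ} (hi : i ≤ W.length) :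
    G.dist s (W.getVert i) = i := by
  obtain ⟨W1, hW1⟩ := exists_prefix_walk W i
  obtain ⟨W2, hW2⟩ := exists_suffix_walk W i
  have h1 : G.dist s (W.getVert i) ≤ i := by
    have := SimpleGraph.dist_le W1
    omega
  have h2 : i ≤ G.dist s (W.getVert i) := by
    by_contra hc
    push_neg at hc
    obtain ⟨W3, hW3⟩ := (SimpleGraph.Walk.reachable W1).exists_walk_length_eq_dist
    have := SimpleGraph.dist_le (W3.append W2)
    rw [Walk.length_append] at this
    omega
  omega

/-- Let `F` be a feedback vertex set of `G` and `s, t` vertices with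
`dist_G(s,t) = k ≥ 4|F| + 3`. Then there is a position `p` with `1 ≤ p ≤ k − 1` such that
any two `st`-shortest paths connected by a TJ-reconfiguration sequence have the same vertex
at position `p`. -/
theorem stmt_14 {V : Type*} [Fintype V] [DecidableEq V] (G : SimpleGraph V) (F : Finset V)
    (hF : (G.induce ((↑F : Set V)ᶜ)).IsAcyclic)
    (s t : V) (k : ℕ) (hk : G.dist s t = k) (hbig : 4 * F.card + 3 ≤ k) :
    ∃ p : ℕ, 1 ≤ p ∧ p ≤ k - 1 ∧
      ∀ P Q : G.Walk s t, IsShortestSTPath G P → IsShortestSTPath G Q →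
        (∃ ℓ : ℕ, TJSeq G P Q ℓ) → P.getVert p = Q.getVert p := by
  classical
  set bad : Finset ℕ :=
    F.biUnion (fun f => {G.dist s f - 1, G.dist s f, G.dist s f + 1}) with hbad
  have hbadcard : bad.card ≤ 3 * F.card := by
    calc bad.card ≤ ∑ f ∈ F, ({G.dist s f - 1, G.dist s f, G.dist s f + 1} : Finset ℕ).card :=
          Finset.card_biUnion_le
      _ ≤ ∑ _f ∈ F, 3 := by
          apply Finset.sum_le_sum
          intro f _
          exact (Finset.card_insert_le _ _).trans
            (Nat.succ_le_succ ((Finset.card_insert_le _ _).trans (by simp)))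
      _ = 3 * F.card := by rw [Finset.sum_const]; ring
  have hIcc : (Finset.Icc 1 (k - 1)).card = k - 1 := by
    rw [Nat.card_Icc]; omega
  have hne : (Finset.Icc 1 (k - 1) \ bad).Nonempty := by
    rw [← Finset.card_pos]
    have := Finset.card_le_card_sdiff_add_card (s := Finset.Icc 1 (k - 1)) (t := bad)
    omega
  obtain ⟨p, hp⟩ := hne
  rw [Finset.mem_sdiff, Finset.mem_Icc] at hp
  obtain ⟨⟨hp1, hpk⟩, hpbad⟩ := hp
  have hnb : ∀ u ∈ F, p ≠ G.dist s u - 1 ∧ p ≠ G.dist s u ∧ p ≠ G.dist s u + 1 := by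
    intro u hu
    by_contra hc
    apply hpbad
    rw [hbad, Finset.mem_biUnion]
    refine ⟨u, hu, ?_⟩
    simp only [Finset.mem_insert, Finset.mem_singleton]
    tauto
  refine ⟨p, hp1, hpk, ?_⟩
  rintro P Q hP hQ ⟨ℓ, f, hf0, hfl, hsp, hadj⟩
  have key : ∀ i ≤ ℓ, (f 0).getVert p = (f i).getVert p := by
    intro i
    induction i with
    | zero => intro _; rfl
    | succ i ih =>
      intro hi
      have hstep : (f i).getVert p = (f (i + 1)).getVert p := by
        by_contra hne
        obtain ⟨hlen, j, hj, huniq⟩ := hadj i (by omega)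
        have hjp : p = j := huniq p hne
        subst hjp
        -- equal at other positions
        have heq : ∀ q, q ≠ p → (f i).getVert q = (f (i + 1)).getVert q := by
          intro q hq
          by_contra hc
          exact hq (huniq q hc)
        obtain ⟨hPi, hLi⟩ := hsp i (by omega)
        obtain ⟨hPi1, hLi1⟩ := hsp (i + 1) (by omega)
        set A := f i with hA
        set B := f (i + 1) with hB
        have hLA : A.length = k := by rw [hLi, hk]
        have hLB : B.length = k := by rw [hLi1, hk]
        have hk3 : 3 ≤ k := by omega
        set a := A.getVert (p - 1) with ha
        set x := A.getVert p with hx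
        set b := A.getVert (p + 1) with hb
        set y := B.getVert p with hy
        have ha' : B.getVert (p - 1) = a := (heq (p - 1) (by omega)).symm
        have hb' : B.getVert (p + 1) = b := (heq (p + 1) (by omega)).symm
        have hda : G.dist s a = p - 1 := dist_getVert A (by omega) (by omega)
        have hdx : G.dist s x = p := dist_getVert A (by omega) (by omega)
        have hdb : G.dist s b = p + 1 := dist_getVert A (by omega) (by omega)
        have hdy : G.dist s y = p := dist_getVert B (by omega) (by omega)
        -- none in F
        have haF : a ∉ F := fun h => by have := hnb a h; omega
        have hxF : x ∉ F := fun h => by have := hnb x h; omega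
        have hbF : b ∉ F := fun h => by have := hnb b h; omega
        have hyF : y ∉ F := fun h => by have := hnb y h; omega
        -- adjacencies
        have hax : G.Adj a x := by
          have := A.adj_getVert_succ (i := p - 1) (by omega)
          rwa [show p - 1 + 1 = p by omega] at this
        have hxb : G.Adj x b := A.adj_getVert_succ (by omega)
        have hay : G.Adj a y := by
          have := B.adj_getVert_succ (i := p - 1) (by omega)
          rwa [show p - 1 + 1 = p by omega, ha'] at this
        have hyb : G.Adj y b := by
          have := B.adj_getVert_succ (i := p) (by omega)
          rwa [hb'] at this
        -- distinctness
        have hab : a ≠ b := fun h => by rw [h] at hda; omega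
        have haxne : a ≠ x := fun h => by rw [h] at hda; omega
        have hxbne : x ≠ b := fun h => by rw [h] at hdx; omega
        have hayne : a ≠ y := fun h => by rw [h] at hda; omega
        have hybne : y ≠ b := fun h => by rw [h] at hdy; omega
        -- in the induced forest
        set S : Set V := (↑F : Set V)ᶜ with hS
        have haS : a ∈ S := by simp [hS, haF]
        have hxS : x ∈ S := by simp [hS, hxF]
        have hbS : b ∈ S := by simp [hS, hbF]
        have hyS : y ∈ S := by simp [hS, hyF]
        have hax' : (G.induce S).Adj ⟨a, haS⟩ ⟨x, hxS⟩ := by simpa using hax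
        have hxb' : (G.induce S).Adj ⟨x, hxS⟩ ⟨b, hbS⟩ := by simpa using hxb
        have hay' : (G.induce S).Adj ⟨a, haS⟩ ⟨y, hyS⟩ := by simpa using hay
        have hyb' : (G.induce S).Adj ⟨y, hyS⟩ ⟨b, hbS⟩ := by simpa using hyb
        have h12 := hF.path_unique
          (⟨Walk.cons hax' (Walk.cons hxb' Walk.nil), by
            simp [Walk.isPath_def, Subtype.ext_iff]
            exact ⟨⟨haxne, hab⟩, hxbne⟩⟩ : (G.induce S).Path ⟨a, haS⟩ ⟨b, hbS⟩)
          (⟨Walk.cons hay' (Walk.cons hyb' Walk.nil), by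
            simp [Walk.isPath_def, Subtype.ext_iff]
            exact ⟨⟨hayne, hab⟩, hybne⟩⟩ : (G.induce S).Path ⟨a, haS⟩ ⟨b, hbS⟩)
        have hw := Subtype.ext_iff.mp h12
        have hsupp := congrArg Walk.support hw
        simp only [Walk.support_cons, Walk.support_nil] at hsupp
        have hxy : x = y := by
          have := List.head_eq_of_cons_eq (List.tail_eq_of_cons_eq hsupp)
          exact Subtype.ext_iff.mp this
        exact hne hxy
      exact (ih (by omega)).trans hstep
  have := key ℓ le_rfl
  rw [hf0, hfl] at this
  exact this
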